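/- Assume Σ_{y ∈ S(x)} w(x,y) = 1 in 𝔽 for every x ∈ T. Then: (i) every function f : T_0 ∪ … ∪ T_N → E satisfying f(x) = Σ_{y ∈ S(x)} w(x,y) f(y) for all x ∈ T_0 ∪ … ∪ T_{N−1} extends to a generalized harmonic function F ∈ H(T,E) with F(y) = F(x) whenever y ∈ S(x) and x ∈ T_n with n ≥ N; and (ii) the set of f ∈ H(T,E) that are eventually locally constant in this sense (there exists N such that f(y) = f(x) for all y ∈ S(x), x ∈ T_n, n ≥ N) is dense in H(T,E). -/

import Mathlib

open MeasureTheory Filter Topology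

/-- A rooted tree with finite levels `T n`, a singleton root level, a parent map,
and at least two children for every vertex. -/
structure TreeData where
  T : ℕ → Type
  fint : ∀ n, Fintype (T n)
  rootSubsingleton : ∀ x y : T 0, x = y
  rootNonempty : Nonempty (T 0)
  par : ∀ n, T (n + 1) → T n
  twoChildren : ∀ n (x : T n), 2 ≤ Nat.card {y : T (n + 1) // par n y = x}

instance (D : TreeData) (n : ℕ) : Fintype (D.T n) := D.fint n

noncomputable instance (D : TreeData) (n : ℕ) (x : D.T n) :
    Fintype {y : D.T (n + 1) // D.par n y = x} := by
  classical exact Subtype.fintype _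

/-- The set of vertices of the tree. -/
def TreeData.Vert (D : TreeData) : Type := Σ n, D.T n

/-- The boundary `∂T` : infinite geodesics starting at the root. -/
def TreeData.Boundary (D : TreeData) : Type :=
  {e : ∀ n, D.T n // ∀ n, D.par n (e (n + 1)) = e n}

/-- The boundary sector `B_x` of geodesics through `x`. -/
def TreeData.sector (D : TreeData) (n : ℕ) (x : D.T n) : Set D.Boundary :=
  {e | e.1 n = x}

/-- The σ-algebra `M_m` generated by the sectors at level `m`. -/
def TreeData.levelMS (D : TreeData) (m : ℕ) : MeasurableSpace D.Boundary :=
  MeasurableSpace.generateFrom {s | ∃ x : D.T m, s = D.sector m x}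

/-- The σ-algebra `M` generated by all boundary sectors. -/
instance TreeData.boundaryMS (D : TreeData) : MeasurableSpace D.Boundary :=
  MeasurableSpace.generateFrom {s | ∃ n, ∃ x : D.T n, s = D.sector n x}

/-- The probability `∏_{j<n} q(y_j, y_{j+1})` of the path from the root to a vertex. -/
def TreeData.pathProb (D : TreeData) (q : ∀ n, D.T (n + 1) → ℝ) :
    ∀ n, D.T n → ℝ
  | 0, _ => 1
  | n + 1, y => D.pathProb q n (D.par n y) * q n y

/-- `f : T → E` is generalized harmonic: `f x = ∑_{y ∈ S x} w x y • f y`. -/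
def TreeData.Harmonic (D : TreeData) {𝔽 E : Type} [Field 𝔽] [AddCommGroup E]
    [Module 𝔽 E] (w : ∀ n, D.T (n + 1) → 𝔽) (f : D.Vert → E) : Prop :=
  ∀ n (x : D.T n),
    f ⟨n, x⟩ = ∑ y : {y : D.T (n + 1) // D.par n y = x}, w n y.1 • f ⟨n + 1, y.1⟩

/-- The set `H(T,E)` of generalized harmonic functions. -/
def TreeData.harmonicSet (D : TreeData) {𝔽 : Type} (E : Type) [Field 𝔽] [AddCommGroup E]
    [Module 𝔽 E] (w : ∀ n, D.T (n + 1) → 𝔽) : Set (D.Vert → E) :=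
  {f | D.Harmonic w f}

/-- `ω_n(f) : ∂T → E`. -/
def TreeData.omegaMap (D : TreeData) {E : Type} (f : D.Vert → E) (n : ℕ)
    (e : D.Boundary) : E := f ⟨n, e.1 n⟩

/-- The pseudometric of convergence in probability associated to a distance `ρ`. -/
noncomputable def TreeData.dPgen (D : TreeData) (P : Measure D.Boundary) {α : Type}
    (ρ : α → α → ℝ) (h g : D.Boundary → α) : ℝ :=
  ∫ e, ρ (h e) (g e) / (1 + ρ (h e) (g e)) ∂P

/-- The metric `d_ℙ` of convergence in probability on `L⁰(∂T, E)`. -/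
noncomputable def TreeData.dP (D : TreeData) (P : Measure D.Boundary) {E : Type}
    [MetricSpace E] (h g : D.Boundary → E) : ℝ :=
  D.dPgen P dist h g

/-- The translation invariant metric `d̃` on `E ^ ℕ` inducing the product topology. -/
noncomputable def dTilde {E : Type} [MetricSpace E] (x y : ℕ → E) : ℝ :=
  ∑' n : ℕ, (1 / 2 : ℝ) ^ n * (dist (x n) (y n) / (1 + dist (x n) (y n)))

/-- Lower density of a set of natural numbers. -/
noncomputable def lowerDensity (A : Set ℕ) : ℝ :=
  Filter.liminf (fun N : ℕ => ((A ∩ Set.Iio N).ncard : ℝ) / N) Filter.atTop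

/-- Upper density of a set of natural numbers. -/
noncomputable def upperDensity (A : Set ℕ) : ℝ :=
  Filter.limsup (fun N : ℕ => ((A ∩ Set.Iio N).ncard : ℝ) / N) Filter.atTop

/-- `f ∈ U_τ(T,E)` : the family `(ω_n f)_{n ∈ τ}` is dense in `L⁰(∂T,E)`. -/
def TreeData.UnivOn (D : TreeData) (P : Measure D.Boundary) {E : Type}
    [MetricSpace E] [MeasurableSpace E] (τ : Set ℕ) (f : D.Vert → E) : Prop :=
  ∀ h : D.Boundary → E, Measurable h → ∀ ε > 0, ∃ n ∈ τ, D.dP P (D.omegaMap f n) h < ε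

/-- `f ∈ U_FM(T,E)` : for every nonempty open subset `V` of `L⁰(∂T,E)` (equivalently,
every ball) the set `{n | ω_n f ∈ V}` has strictly positive lower density. -/
def TreeData.FreqUniv (D : TreeData) (P : Measure D.Boundary) {E : Type}
    [MetricSpace E] [MeasurableSpace E] (f : D.Vert → E) : Prop :=
  ∀ h : D.Boundary → E, Measurable h → ∀ ε > 0,
    0 < lowerDensity {n | D.dP P (D.omegaMap f n) h < ε}

/-- `f ∈ U_FM^τ(T,E)` for `τ` enumerated by `ns`. -/
def TreeData.FreqUnivAlong (D : TreeData) (P : Measure D.Boundary) {E : Type}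
    [MetricSpace E] [MeasurableSpace E] (ns : ℕ → ℕ) (f : D.Vert → E) : Prop :=
  ∀ h : D.Boundary → E, Measurable h → ∀ ε > 0,
    0 < lowerDensity {k | D.dP P (D.omegaMap f (ns k)) h < ε}

/-- `f ∈ X(T,E)` : for every nonempty open subset `V` of `L⁰(∂T,E)` (equivalently,
every ball) the set `{n | ω_n f ∈ V}` has upper density `1`. -/
def TreeData.UpperUniv (D : TreeData) (P : Measure D.Boundary) {E : Type}
    [MetricSpace E] [MeasurableSpace E] (f : D.Vert → E) : Prop :=
  ∀ h : D.Boundary → E, Measurable h → ∀ ε > 0,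
    upperDensity {n | D.dP P (D.omegaMap f n) h < ε} = 1

/-- `f ∈ U_FM(T, E^ℕ)` where `E^ℕ` carries the metric `d̃`. -/
def TreeData.FreqUnivPi (D : TreeData) (P : Measure D.Boundary) {E : Type}
    [MetricSpace E] [MeasurableSpace E] (f : D.Vert → (ℕ → E)) : Prop :=
  ∀ h : D.Boundary → (ℕ → E), Measurable h → ∀ ε > 0,
    0 < lowerDensity {n | D.dPgen P dTilde (D.omegaMap f n) h < ε}
section AuxExt

variable (D : TreeData) {𝔽 E : Type} [Field 𝔽] [AddCommGroup E] [Module 𝔽 E]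

/-- Extend a function defined (meaningfully) on levels `0,…,N` by making it
constant along children from level `N` on. -/
def extFun (N : ℕ) (f : ∀ n, D.T n → E) : ∀ n, D.T n → E
  | 0 => f 0
  | (n + 1) => fun y => if n + 1 ≤ N then f (n + 1) y else extFun N f n (D.par n y)

lemma extFun_le (N : ℕ) (f : ∀ n, D.T n → E) :
    ∀ n, n ≤ N → ∀ x : D.T n, extFun D N f n x = f n x
  | 0, _, x => rfl
  | (n + 1), h, x => by simp [extFun, h]

lemma extFun_gt (N : ℕ) (f : ∀ n, D.T n → E) (n : ℕ) (h : N ≤ n) (y : D.T (n + 1)) :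
    extFun D N f (n + 1) y = extFun D N f n (D.par n y) := by
  simp only [extFun, if_neg (by omega : ¬ n + 1 ≤ N)]

lemma extFun_harmonic (w : ∀ n, D.T (n + 1) → 𝔽)
    (hw1 : ∀ n (x : D.T n), ∑ y : {y : D.T (n + 1) // D.par n y = x}, w n y.1 = 1)
    (N : ℕ) (f : ∀ n, D.T n → E)
    (hf : ∀ n, n < N → ∀ x : D.T n,
      f n x = ∑ y : {y : D.T (n + 1) // D.par n y = x}, w n y.1 • f (n + 1) y.1) :
    D.Harmonic w (fun v => extFun D N f v.1 v.2) := by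
  intro n x
  rcases lt_or_ge n N with h | h
  · simp only
    rw [extFun_le D N f n h.le x, hf n h x]
    refine Finset.sum_congr rfl fun y _ => ?_
    rw [extFun_le D N f (n + 1) (by omega) y.1]
  · simp only
    have : ∀ y : {y : D.T (n + 1) // D.par n y = x},
        extFun D N f (n + 1) y.1 = extFun D N f n x := by
      intro y
      rw [extFun_gt D N f n h y.1, y.2]
    calc extFun D N f n x = (∑ y : {y : D.T (n + 1) // D.par n y = x}, w n y.1) •
          extFun D N f n x := by rw [hw1, one_smul]
      _ = ∑ y : {y : D.T (n + 1) // D.par n y = x}, w n y.1 • extFun D N f (n + 1) y.1 := by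
          rw [Finset.sum_smul]
          exact Finset.sum_congr rfl fun y _ => by rw [this y]

end AuxExt

/-- Assume Σ_{y ∈ S(x)} w(x,y) = 1. Then (i) every f defined on levels
0,…,N and harmonic up to level N−1 extends to F ∈ H(T,E) with F constant along children
from level N on; and (ii) the set of eventually locally constant f ∈ H(T,E) is dense
in H(T,E). -/
theorem locally_constant_extension_and_dense (D : TreeData)
    {𝔽 E : Type} [Field 𝔽] [TopologicalSpace 𝔽] [T2Space 𝔽]
    [TopologicalSpace.SeparableSpace 𝔽] [ContinuousAdd 𝔽] [ContinuousInv₀ 𝔽]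
    [AddCommGroup E] [Module 𝔽 E] [MetricSpace E]
    [TopologicalSpace.SeparableSpace E] [ContinuousAdd E] [ContinuousSMul 𝔽 E]
    (w : ∀ n, D.T (n + 1) → 𝔽) (hw : ∀ n y, w n y ≠ 0)
    (hdist : ∀ a x y : E, dist (a + x) (a + y) = dist x y)
    (hw1 : ∀ n (x : D.T n), ∑ y : {y : D.T (n + 1) // D.par n y = x}, w n y.1 = 1) :
    (∀ N : ℕ, ∀ f : ∀ n, D.T n → E,
      (∀ n, n < N → ∀ x : D.T n,
        f n x = ∑ y : {y : D.T (n + 1) // D.par n y = x}, w n y.1 • f (n + 1) y.1) →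
      ∃ F : D.Vert → E, F ∈ D.harmonicSet E w ∧
        (∀ n, n ≤ N → ∀ x : D.T n, F ⟨n, x⟩ = f n x) ∧
        (∀ n, N ≤ n → ∀ y : D.T (n + 1), F ⟨n + 1, y⟩ = F ⟨n, D.par n y⟩)) ∧
    Dense {g : ↥(D.harmonicSet E w) | ∃ N : ℕ, ∀ n, N ≤ n →
      ∀ y : D.T (n + 1),
        (g : ↥(D.harmonicSet E w)).1 ⟨n + 1, y⟩ = (g : ↥(D.harmonicSet E w)).1 ⟨n, D.par n y⟩} := by
  classical
  have main : ∀ N : ℕ, ∀ f : ∀ n, D.T n → E,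
      (∀ n, n < N → ∀ x : D.T n,
        f n x = ∑ y : {y : D.T (n + 1) // D.par n y = x}, w n y.1 • f (n + 1) y.1) →
      ∃ F : D.Vert → E, F ∈ D.harmonicSet E w ∧
        (∀ n, n ≤ N → ∀ x : D.T n, F ⟨n, x⟩ = f n x) ∧
        (∀ n, N ≤ n → ∀ y : D.T (n + 1), F ⟨n + 1, y⟩ = F ⟨n, D.par n y⟩) := by
    intro N f hf
    refine ⟨fun v => extFun D N f v.1 v.2, extFun_harmonic D w hw1 N f hf, ?_, ?_⟩
    · intro n hn x; exact extFun_le D N f n hn x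
    · intro n hn y; exact extFun_gt D N f n hn y
  refine ⟨main, ?_⟩
  rw [dense_iff_closure_eq, Set.eq_univ_iff_forall]
  intro g
  rw [mem_closure_iff_nhds]
  intro U hU
  rw [nhds_subtype, Filter.mem_comap] at hU
  obtain ⟨V, hV, hVU⟩ := hU
  rw [nhds_pi, Filter.mem_pi] at hV
  obtain ⟨I, hIfin, t, ht, htV⟩ := hV
  -- bound the levels occurring in `I`
  obtain ⟨N, hN⟩ : ∃ N : ℕ, ∀ v ∈ I, v.1 ≤ N := by
    obtain ⟨N, hN⟩ := (hIfin.image Sigma.fst).bddAbove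
    exact ⟨N, fun v hv => hN (Set.mem_image_of_mem _ hv)⟩
  obtain ⟨F, hF, hFle, hFgt⟩ := main N (fun n x => g.1 ⟨n, x⟩)
    (fun n _ x => g.2 n x)
  refine ⟨⟨F, hF⟩, hVU ?_, ⟨N, fun n hn y => hFgt n hn y⟩⟩
  refine htV fun v hv => ?_
  have : F v = g.1 v := by
    have := hFle v.1 (hN v hv) v.2
    exact this
  show F v ∈ t v
  rw [this]
  exact mem_of_mem_nhds (ht v)
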